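/- Let H be a complex Hilbert space, let Ω be a bounded selfadjoint positive operator on H which is bijective with bounded inverse Ω⁻¹, and let T be a selfadjoint (densely defined) operator in H with domain D. Then the operator S with domain Ω(D) := { Ω x : x ∈ D } defined by S(Ω x) = Ω⁻¹(T x) (i.e. S = Ω⁻¹ ∘ T ∘ Ω⁻¹) is selfadjoint. -/
import Mathlib


open scoped InnerProductSpace

/-- The composition `S ∘ B` of a partially defined operator `S` with an everywhere-defined
linear map `B`, with domain `{x | B x ∈ dom S}`. -/
noncomputable def pmapCompLM {𝕜 H₁ H₂ H₃ : Type*} [RCLike 𝕜]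
    [NormedAddCommGroup H₁] [InnerProductSpace 𝕜 H₁]
    [NormedAddCommGroup H₂] [InnerProductSpace 𝕜 H₂]
    [NormedAddCommGroup H₃] [InnerProductSpace 𝕜 H₃]
    (S : H₂ →ₗ.[𝕜] H₃) (B : H₁ →ₗ[𝕜] H₂) : H₁ →ₗ.[𝕜] H₃ where
  domain := S.domain.comap B
  toFun := S.toFun.comp (B.restrict fun _ hx => hx)

/-- The operator `Ω⁻¹ ∘ T ∘ Ω⁻¹` for a continuous linear equivalence `Ω` and a partially
defined operator `T`; its domain is `{x | Ω⁻¹ x ∈ dom T} = Ω (dom T)`. -/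
noncomputable def conjOp {H : Type*} [NormedAddCommGroup H] [InnerProductSpace ℂ H]
    (Ω : H ≃L[ℂ] H) (T : H →ₗ.[ℂ] H) : H →ₗ.[ℂ] H :=
  (((Ω.symm : H →L[ℂ] H)) : H →ₗ[ℂ] H).compPMap
    (pmapCompLM T (((Ω.symm : H →L[ℂ] H)) : H →ₗ[ℂ] H))

section aux

variable {H : Type*} [NormedAddCommGroup H] [InnerProductSpace ℂ H]
  (Ω : H ≃L[ℂ] H) (T : H →ₗ.[ℂ] H)

lemma conjOp_domain :
    (conjOp Ω T).domain = T.domain.comap ((Ω.symm : H →L[ℂ] H) : H →ₗ[ℂ] H) := rfl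

lemma conjOp_mem_domain {x : H} (hx : Ω.symm x ∈ T.domain) : x ∈ (conjOp Ω T).domain := hx

lemma conjOp_apply (x : (conjOp Ω T).domain) :
    conjOp Ω T x = Ω.symm (T ⟨Ω.symm (x : H), x.2⟩) := rfl

lemma symm_isSymmetric [CompleteSpace H] (hΩ : ((Ω : H →L[ℂ] H)).IsPositive)
    (x y : H) : ⟪Ω.symm x, y⟫_ℂ = ⟪x, Ω.symm y⟫_ℂ := by
  have hs := hΩ.isSelfAdjoint.isSymmetric
  calc ⟪Ω.symm x, y⟫_ℂ = ⟪Ω.symm x, Ω (Ω.symm y)⟫_ℂ := by rw [Ω.apply_symm_apply]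
    _ = ⟪Ω (Ω.symm x), Ω.symm y⟫_ℂ := (hs _ _).symm
    _ = ⟪x, Ω.symm y⟫_ℂ := by rw [Ω.apply_symm_apply]

end aux

/- Statement 5: if `Ω` is a bounded selfadjoint positive operator, bijective with bounded
inverse, and `T` is selfadjoint (densely defined with `T* = T`), then the operator
`S = Ω⁻¹ ∘ T ∘ Ω⁻¹` with domain `Ω(dom T)` is selfadjoint. -/
theorem stmt5 {H : Type*} [NormedAddCommGroup H] [InnerProductSpace ℂ H] [CompleteSpace H]
    (Ω : H ≃L[ℂ] H) (hΩ : ((Ω : H →L[ℂ] H)).IsPositive)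
    (T : H →ₗ.[ℂ] H) (hT : Dense (T.domain : Set H))
    (hsa : T.adjoint = T) :
    (conjOp Ω T).adjoint = conjOp Ω T := by
  set S := conjOp Ω T with hS
  -- symmetry of T
  have hTsymm : T.IsFormalAdjoint T := by
    have := LinearPMap.adjoint_isFormalAdjoint hT (T := T)
    rwa [hsa] at this
  -- density of the domain of S
  have hSdense : Dense (S.domain : Set H) := by
    have heq : (S.domain : Set H) = ⇑(Ω.symm) ⁻¹' (T.domain : Set H) := rfl
    rw [heq]
    exact hT.preimage Ω.symm.toHomeomorph.isOpenMap
  have hΩsymm := hΩ.isSelfAdjoint.isSymmetric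
  -- S is symmetric
  have hform : S.IsFormalAdjoint S := by
    intro x y
    calc ⟪S x, (y : H)⟫_ℂ
        = ⟪Ω.symm (T ⟨Ω.symm (x : H), x.2⟩), (y : H)⟫_ℂ := rfl
      _ = ⟪T ⟨Ω.symm (x : H), x.2⟩, Ω.symm (y : H)⟫_ℂ := symm_isSymmetric Ω hΩ _ _
      _ = ⟪Ω.symm (x : H), T ⟨Ω.symm (y : H), y.2⟩⟫_ℂ :=
          hTsymm ⟨Ω.symm (x : H), x.2⟩ ⟨Ω.symm (y : H), y.2⟩
      _ = ⟪(x : H), Ω.symm (T ⟨Ω.symm (y : H), y.2⟩)⟫_ℂ := by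
          rw [symm_isSymmetric Ω hΩ (x : H) (T ⟨Ω.symm (y : H), y.2⟩)]
      _ = ⟪(x : H), S y⟫_ℂ := rfl
  have hle : S ≤ S.adjoint := hform.le_adjoint hSdense
  -- the adjoint domain is contained in the domain of S
  have hdomle : S.adjoint.domain ≤ S.domain := by
    intro y hy
    have hmem : ∀ u : T.domain, Ω.symm (Ω (u : H)) ∈ T.domain := fun u => by
      rw [Ω.symm_apply_apply]; exact u.2
    have key : ∀ u : T.domain,
        ⟪Ω (S.adjoint ⟨y, hy⟩), (u : H)⟫_ℂ = ⟪Ω.symm y, T u⟫_ℂ := by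
      intro u
      have hΩu : Ω (u : H) ∈ S.domain := conjOp_mem_domain Ω T (hmem u)
      have he : (⟨Ω.symm (Ω (u : H)), hΩu⟩ : T.domain) = u :=
        Subtype.ext (Ω.symm_apply_apply _)
      have h3 : S ⟨Ω (u : H), hΩu⟩ = Ω.symm (T u) := by
        show Ω.symm (T ⟨Ω.symm (Ω (u : H)), hΩu⟩) = Ω.symm (T u)
        rw [he]
      calc ⟪Ω (S.adjoint ⟨y, hy⟩), (u : H)⟫_ℂ
          = ⟪S.adjoint ⟨y, hy⟩, Ω (u : H)⟫_ℂ := hΩsymm _ _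
        _ = ⟪y, S ⟨Ω (u : H), hΩu⟩⟫_ℂ := by
            exact LinearPMap.adjoint_isFormalAdjoint hSdense ⟨y, hy⟩ ⟨Ω (u : H), hΩu⟩
        _ = ⟪y, Ω.symm (T u)⟫_ℂ := by rw [h3]
        _ = ⟪Ω.symm y, T u⟫_ℂ := (symm_isSymmetric Ω hΩ y (T u)).symm
    have hmem' : Ω.symm y ∈ T.adjoint.domain :=
      LinearPMap.mem_adjoint_domain_of_exists _ ⟨Ω (S.adjoint ⟨y, hy⟩), key⟩
    rw [hsa] at hmem'
    exact conjOp_mem_domain Ω T hmem'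
  exact (LinearPMap.eq_of_le_of_domain_eq hle (le_antisymm hle.1 hdomle)).symm
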